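/- arXiv:2009.04831 — 3 statements merged into one kernel-verified Lean document; each statement's English description precedes it below -/
import Mathlib

section
/- Let Kₙ be the complete graph on n ≥ 1 vertices and let G₂ be a finite graph with at least one vertex. Then κ(Kₙ∘G₂) = (n−1)·|V(G₂)| + κ(G₂). -/
/-- The lexicographic product of two simple graphs: `(x₁,y₁)` is adjacent to `(x₂,y₂)`
iff `x₁x₂` is an edge of `G`, or `x₁ = x₂` and `y₁y₂` is an edge of `H`. -/
def lexProd {V W : Type*} (G : SimpleGraph V) (H : SimpleGraph W) :
    SimpleGraph (V × W) where
  Adj p q := G.Adj p.1 q.1 ∨ (p.1 = q.1 ∧ H.Adj p.2 q.2)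
  symm := ⟨by
    rintro ⟨x₁, y₁⟩ ⟨x₂, y₂⟩ (h | ⟨rfl, h⟩)
    · exact Or.inl h.symm
    · exact Or.inr ⟨rfl, h.symm⟩⟩
  loopless := ⟨by
    rintro ⟨x, y⟩ (h | ⟨-, h⟩)
    · exact G.irrefl h
    · exact H.irrefl h⟩

/-- The set `V₀(G)` of isolated vertices of `G`. -/
def isoSet {V : Type*} (G : SimpleGraph V) : Set V := {v | ∀ w, ¬ G.Adj v w}

/-- The set of vertices of `G − S` that are isolated in `G − S`,
i.e. `V₀(G − S)` regarded as a subset of the vertices of `G`. -/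
def isolatedAfter {V : Type*} (G : SimpleGraph V) (S : Set V) : Set V :=
  {v | v ∉ S ∧ ∀ w ∉ S, ¬ G.Adj v w}

/-- `S` is a vertex-cut of `G`: deleting `S` leaves a disconnected graph, or reduces `G`
to the trivial one-vertex graph `K₁`. -/
def IsVertexCut {V : Type*} (G : SimpleGraph V) (S : Set V) : Prop :=
  (Sᶜ.Nonempty ∧ ¬ (G.induce Sᶜ).Connected) ∨ (∃ v, Sᶜ = {v})

/-- The connectivity `κ(G)`: the minimum cardinality of a vertex-cut of `G`. -/
noncomputable def graphConnectivity {V : Type*} (G : SimpleGraph V) : ℕ :=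
  sInf {n | ∃ S : Set V, IsVertexCut G S ∧ S.ncard = n}

/-- A minimum vertex-cut: a vertex-cut of cardinality `κ(G)`. -/
def IsMinVertexCut {V : Type*} (G : SimpleGraph V) (S : Set V) : Prop :=
  IsVertexCut G S ∧ S.ncard = graphConnectivity G

/-- A k₁-vertex-cut: a vertex-cut `S` such that `G − S` has no isolated vertices. -/
def IsK1VertexCut {V : Type*} (G : SimpleGraph V) (S : Set V) : Prop :=
  IsVertexCut G S ∧ ∀ v ∉ S, ∃ w ∉ S, G.Adj v w

/-- The k₁-connectivity `k₁(G)`, valued in `ℕ∞`; it is `⊤` (infinity) if `G`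
has no k₁-vertex-cut. -/
noncomputable def k1Connectivity {V : Type*} (G : SimpleGraph V) : ℕ∞ :=
  sInf {n : ℕ∞ | ∃ S : Set V, IsK1VertexCut G S ∧ (S.ncard : ℕ∞) = n}

/-- `G` is super connected if every minimum vertex-cut isolates a vertex,
i.e. some vertex of `G − S` has no neighbours in `G − S`. -/
def SuperConnected {V : Type*} (G : SimpleGraph V) : Prop :=
  ∀ S : Set V, IsMinVertexCut G S → ∃ v ∉ S, ∀ w ∉ S, ¬ G.Adj v w

/-- aux iso -/
def colIso {W : Type*} (G₂ : SimpleGraph W) (n : ℕ) (i : Fin n) (U : Set W) :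
    ((lexProd (⊤ : SimpleGraph (Fin n)) G₂).induce {p : Fin n × W | p.1 = i ∧ p.2 ∈ U}) ≃g
      (G₂.induce U) where
  toFun p := ⟨p.1.2, p.2.2⟩
  invFun w := ⟨(i, w.1), rfl, w.2⟩
  left_inv := by rintro ⟨⟨a, b⟩, rfl, hb⟩; rfl
  right_inv := fun w => rfl
  map_rel_iff' := by
    rintro ⟨⟨a, b⟩, ha, hb⟩ ⟨⟨c, d⟩, hc, hd⟩
    simp only [Set.mem_setOf_eq] at ha hc
    dsimp at ha hc ⊢
    subst ha; subst hc
    simp [lexProd]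

lemma ncard_cut {W : Type*} [Fintype W] (k : ℕ) (i : Fin (k+1)) (T : Set W) :
    ({p : Fin (k+1) × W | p.1 ≠ i ∨ p.2 ∈ T}).ncard = k * Fintype.card W + T.ncard := by
  have hc : {p : Fin (k+1) × W | p.1 ≠ i ∨ p.2 ∈ T}ᶜ = {p : Fin (k+1) × W | p.1 = i ∧ p.2 ∈ Tᶜ} := by
    ext p; simp [not_or]
  have h1 := Set.ncard_add_ncard_compl {p : Fin (k+1) × W | p.1 ≠ i ∨ p.2 ∈ T}
  have h2 := Set.ncard_add_ncard_compl T
  have h3 : ({p : Fin (k+1) × W | p.1 = i ∧ p.2 ∈ Tᶜ}).ncard = Tᶜ.ncard := by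
    rw [← Nat.card_coe_set_eq, ← Nat.card_coe_set_eq]
    exact Nat.card_congr (colIso (⊥ : SimpleGraph W) (k+1) i Tᶜ).toEquiv
  have h4 : Nat.card (Fin (k+1) × W) = (k+1) * Fintype.card W := by
    simp [Nat.card_eq_fintype_card]
  have h5 : Nat.card W = Fintype.card W := Nat.card_eq_fintype_card
  have h6 : (k+1) * Fintype.card W = k * Fintype.card W + Fintype.card W := by ring
  rw [hc, h3, h4, h6] at h1
  omega


/-- κ(Kₙ∘G₂) = (n−1)·|V(G₂)| + κ(G₂). -/
theorem connectivity_lexProd_complete {W : Type*} [Fintype W] [Nonempty W]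
    (n : ℕ) (hn : 1 ≤ n) (G₂ : SimpleGraph W) :
    graphConnectivity (lexProd (⊤ : SimpleGraph (Fin n)) G₂)
      = (n - 1) * Fintype.card W + graphConnectivity G₂ := by
  classical
  obtain ⟨k, rfl⟩ : ∃ k, n = k + 1 := ⟨n - 1, by omega⟩
  simp only [Nat.add_sub_cancel]
  set m := Fintype.card W with hm_def
  have hm : 1 ≤ m := Fintype.card_pos
  obtain ⟨w₀⟩ := ‹Nonempty W›
  -- trivial cut of G₂
  have htriv : ∃ S : Set W, IsVertexCut G₂ S ∧ S.ncard = m - 1 := by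
    refine ⟨{w₀}ᶜ, Or.inr ⟨w₀, by simp⟩, ?_⟩
    have := Set.ncard_add_ncard_compl ({w₀} : Set W)
    rw [Set.ncard_singleton, Nat.card_eq_fintype_card] at this
    omega
  have hne2 : {t | ∃ S : Set W, IsVertexCut G₂ S ∧ S.ncard = t}.Nonempty :=
    ⟨m - 1, htriv⟩
  have hκle : graphConnectivity G₂ ≤ m - 1 := Nat.sInf_le htriv
  obtain ⟨T, hTcut, hTcard⟩ : ∃ S : Set W, IsVertexCut G₂ S ∧
      S.ncard = graphConnectivity G₂ := Nat.sInf_mem hne2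
  set i₀ : Fin (k+1) := 0
  -- the candidate cut in the product
  have hmem : ∃ S : Set (Fin (k+1) × W),
      IsVertexCut (lexProd (⊤ : SimpleGraph (Fin (k+1))) G₂) S ∧
      S.ncard = k * m + graphConnectivity G₂ := by
    refine ⟨{p | p.1 ≠ i₀ ∨ p.2 ∈ T}, ?_, by rw [ncard_cut, hTcard]⟩
    have hc : {p : Fin (k+1) × W | p.1 ≠ i₀ ∨ p.2 ∈ T}ᶜ
        = {p : Fin (k+1) × W | p.1 = i₀ ∧ p.2 ∈ Tᶜ} := by
      ext p; simp [not_or]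
    rcases hTcut with ⟨hne, hnc⟩ | ⟨w, hw⟩
    · left
      constructor
      · obtain ⟨w, hw⟩ := hne
        exact ⟨(i₀, w), by rw [hc]; exact ⟨rfl, hw⟩⟩
      · rw [hc, (colIso G₂ (k+1) i₀ Tᶜ).connected_iff]
        exact hnc
    · right
      refine ⟨(i₀, w), ?_⟩
      rw [hc, hw]
      ext p
      simp [Prod.ext_iff, Set.mem_singleton_iff]
  apply le_antisymm
  · exact Nat.sInf_le hmem
  · rw [show graphConnectivity (lexProd (⊤ : SimpleGraph (Fin (k+1))) G₂)
        = sInf {t | ∃ S : Set (Fin (k+1) × W),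
            IsVertexCut (lexProd (⊤ : SimpleGraph (Fin (k+1))) G₂) S ∧ S.ncard = t} from rfl]
    refine le_csInf ⟨k * m + graphConnectivity G₂, hmem⟩ ?_
    rintro t ⟨S, hcut, rfl⟩
    have htot := Set.ncard_add_ncard_compl S
    have h4 : Nat.card (Fin (k+1) × W) = (k+1) * m := by
      simp [Nat.card_eq_fintype_card, hm_def]
    rw [h4] at htot
    have h6 : (k+1) * m = k * m + m := by ring
    rcases hcut with ⟨hne, hnc⟩ | ⟨v, hv⟩
    · -- disconnected case
      rw [SimpleGraph.connected_iff] at hnc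
      push_neg at hnc
      have hne' : Nonempty ↥Sᶜ := hne.to_subtype
      obtain ⟨a, b, hab⟩ : ∃ a b : ↥Sᶜ,
          ¬ ((lexProd (⊤ : SimpleGraph (Fin (k+1))) G₂).induce Sᶜ).Reachable a b := by
        by_contra h
        push_neg at h
        exact (hnc (fun u v => h u v)).false hne'.some
      have hadj : ∀ u v : ↥Sᶜ, u.1.1 ≠ v.1.1 →
          ((lexProd (⊤ : SimpleGraph (Fin (k+1))) G₂).induce Sᶜ).Adj u v :=
        fun u v h => Or.inl h
      have hiab : a.1.1 = b.1.1 := by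
        by_contra h
        exact hab (hadj a b h).reachable
      set i : Fin (k+1) := a.1.1 with hi_def
      have hall : ∀ p ∈ Sᶜ, p.1 = i := by
        intro p hp
        by_contra h
        have h1 : ((⟨p, hp⟩ : ↥Sᶜ)).1.1 ≠ a.1.1 := h
        have h2 : ((⟨p, hp⟩ : ↥Sᶜ)).1.1 ≠ b.1.1 := hiab ▸ h
        exact hab ((hadj _ _ h1).symm.reachable.trans (hadj _ _ h2).reachable)
      set T' : Set W := {w | (i, w) ∈ S} with hT'_def
      have hSc : Sᶜ = {p : Fin (k+1) × W | p.1 = i ∧ p.2 ∈ T'ᶜ} := by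
        ext p
        constructor
        · intro hp
          refine ⟨hall p hp, ?_⟩
          have : (i, p.2) = p := by
            rw [← hall p hp]
          rw [Set.mem_compl_iff, hT'_def, Set.mem_setOf_eq, this]
          exact hp
        · rintro ⟨h1, h2⟩
          have : (i, p.2) = p := by rw [← h1]
          rw [Set.mem_compl_iff, ← this]
          exact h2
      have hS : S = {p : Fin (k+1) × W | p.1 ≠ i ∨ p.2 ∈ T'} := by
        have := congrArg compl hSc
        rw [compl_compl] at this
        rw [this]
        ext p; simp [not_and_or]; tauto
      have hT'cut : IsVertexCut G₂ T' := by
        left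
        constructor
        · refine ⟨a.1.2, ?_⟩
          exact ((Set.ext_iff.mp hSc a.1).mp a.2).2
        · rw [hSc] at hnc
          intro hcon
          have hnea : Nonempty ↥{p : Fin (k+1) × W | p.1 = i ∧ p.2 ∈ T'ᶜ} := by
            refine ⟨⟨a.1, ?_⟩⟩
            rw [← hSc]; exact a.2
          rw [← (colIso G₂ (k+1) i T'ᶜ).connected_iff] at hcon
          rw [SimpleGraph.connected_iff] at hcon
          exact (hnc hcon.1).false hnea.some
      have hκT : graphConnectivity G₂ ≤ T'.ncard := Nat.sInf_le ⟨T', hT'cut, rfl⟩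
      rw [hS, ncard_cut, ← hm_def]
      omega
    · -- singleton complement case
      have : Sᶜ.ncard = 1 := by rw [hv, Set.ncard_singleton]
      omega
end

section
/- Let G₁ be a finite connected graph that is not complete and let G₂ be a finite disconnected graph with no isolated vertices (|V₀(G₂)| = 0). Then the lexicographic product G₁∘G₂ is not super connected. -/
set_option linter.unusedSectionVars false
set_option linter.unusedVariables false

section Helpers

variable {V W : Type*} (G₁ : SimpleGraph V) (G₂ : SimpleGraph W)

lemma myncard_prod (s : Set V) (t : Set W) :
    (s ×ˢ t).ncard = s.ncard * t.ncard := by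
  rw [← Nat.card_coe_set_eq, Nat.card_congr (Equiv.Set.prod s t), Nat.card_prod,
    Nat.card_coe_set_eq, Nat.card_coe_set_eq]

lemma mycompl_prod (s : Set V) :
    (s ×ˢ (Set.univ : Set W))ᶜ = sᶜ ×ˢ Set.univ := by
  ext ⟨x, y⟩; simp

/-- In a connected graph with two distinct vertices, every vertex has a neighbour. -/
lemma exists_adj_of_connected {V' : Type*} {G : SimpleGraph V'} (h : G.Connected)
    {a b : V'} (hab : a ≠ b) (v : V') : ∃ w, G.Adj v w := by
  have hv : v ≠ a ∨ v ≠ b := by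
    by_contra hc; push_neg at hc; exact hab (hc.1 ▸ hc.2 ▸ rfl)
  obtain (hv | hv) := hv
  · obtain ⟨w⟩ := h.preconnected v a
    cases w with
    | nil => exact absurd rfl hv
    | cons hadj _ => exact ⟨_, hadj⟩
  · obtain ⟨w⟩ := h.preconnected v b
    cases w with
    | nil => exact absurd rfl hv
    | cons hadj _ => exact ⟨_, hadj⟩

/-- Projection of reachability in the induced lex product onto the first factor. -/
lemma proj_reachable {A : Set V} :
    ∀ {p q : ↥(A ×ˢ (Set.univ : Set W))},
      ((lexProd G₁ G₂).induce (A ×ˢ Set.univ)).Walk p q →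
      (G₁.induce A).Reachable ⟨p.1.1, p.2.1⟩ ⟨q.1.1, q.2.1⟩ := by
  intro p q w
  induction w with
  | nil => exact SimpleGraph.Reachable.refl _
  | @cons u c b hadj w ih =>
    rcases hadj with h | ⟨heq, -⟩
    · exact (SimpleGraph.Adj.reachable (by exact h :
        (G₁.induce A).Adj ⟨u.1.1, u.2.1⟩ ⟨c.1.1, c.2.1⟩)).trans ih
    · have : (⟨u.1.1, u.2.1⟩ : ↥A) = ⟨c.1.1, c.2.1⟩ := Subtype.ext heq
      rw [this]; exact ih

/-- If deleting `T` from `G₁` leaves a connected graph with ≥ 2 vertices, and `S` projects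
onto at most `T`, then the lex product minus `S` is connected. -/
lemma connected_del {S : Set (V × W)} {T : Set V}
    (hT : ∀ x ∉ T, ∃ y, (x, y) ∉ S)
    (hsub : ∀ x y, (x, y) ∉ S → x ∉ T)
    (hTc : (G₁.induce Tᶜ).Connected)
    (h2 : ∃ a b : ↥Tᶜ, a ≠ b) :
    ((lexProd G₁ G₂).induce Sᶜ).Connected := by
  obtain ⟨a₀, b₀, hab₀⟩ := h2
  have key : ∀ {a b : ↥Tᶜ} (_ : (G₁.induce Tᶜ).Walk a b) (ya yb : W)
      (hya : (↑a, ya) ∈ Sᶜ) (hyb : (↑b, yb) ∈ Sᶜ),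
      ((lexProd G₁ G₂).induce Sᶜ).Reachable ⟨(↑a, ya), hya⟩ ⟨(↑b, yb), hyb⟩ := by
    intro a b w
    induction w with
    | @nil a =>
      intro ya yb hya hyb
      obtain ⟨c, hc⟩ := exists_adj_of_connected hTc hab₀ a
      obtain ⟨yc, hyc⟩ := hT ↑c c.2
      have h1 : ((lexProd G₁ G₂).induce Sᶜ).Adj ⟨(↑a, ya), hya⟩ ⟨(↑c, yc), hyc⟩ :=
        Or.inl hc
      have h2' : ((lexProd G₁ G₂).induce Sᶜ).Adj ⟨(↑c, yc), hyc⟩ ⟨(↑a, yb), hyb⟩ :=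
        Or.inl hc.symm
      exact h1.reachable.trans h2'.reachable
    | @cons a c b hadj w ih =>
      intro ya yb hya hyb
      obtain ⟨yc, hyc⟩ := hT ↑c c.2
      have h1 : ((lexProd G₁ G₂).induce Sᶜ).Adj ⟨(↑a, ya), hya⟩ ⟨(↑c, yc), hyc⟩ :=
        Or.inl hadj
      exact h1.reachable.trans (ih yc yb hyc hyb)
  obtain ⟨y₀, hy₀⟩ := hT ↑a₀ a₀.2
  haveI : Nonempty ↥Sᶜ := ⟨⟨(↑a₀, y₀), hy₀⟩⟩
  refine ⟨?_⟩
  rintro ⟨⟨x, y⟩, hxy⟩ ⟨⟨x', y'⟩, hxy'⟩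
  have hx : x ∉ T := hsub x y hxy
  have hx' : x' ∉ T := hsub x' y' hxy'
  obtain ⟨w⟩ := hTc.preconnected ⟨x, hx⟩ ⟨x', hx'⟩
  exact key w y y' hxy hxy'

end Helpers

section Main

variable {V W : Type*} [Fintype V] [Fintype W] [Nonempty W]
  (G₁ : SimpleGraph V) (G₂ : SimpleGraph W)

lemma exists_nonadj (hnc : G₁ ≠ ⊤) : ∃ u v, u ≠ v ∧ ¬ G₁.Adj u v := by
  by_contra h
  push_neg at h
  apply hnc
  ext u v
  exact ⟨fun a => a.ne, fun hne => h u v hne⟩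

lemma pair_cut {u v : V} (hne : u ≠ v) (hnadj : ¬ G₁.Adj u v) :
    IsVertexCut G₁ ({u, v} : Set V)ᶜ := by
  have hcc : (({u, v} : Set V)ᶜ)ᶜ = {u, v} := compl_compl _
  unfold IsVertexCut
  rw [hcc]
  left
  refine ⟨⟨u, by simp⟩, ?_⟩
  have hbot : G₁.induce ({u, v} : Set V) = ⊥ := by
    ext ⟨a, ha⟩ ⟨b, hb⟩
    simp only [SimpleGraph.comap_adj, Function.Embedding.coe_subtype, SimpleGraph.bot_adj,
      iff_false]
    intro hadj
    rcases ha with rfl | rfl <;> rcases hb with rfl | rfl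
    · exact G₁.irrefl hadj
    · exact hnadj hadj
    · exact hnadj hadj.symm
    · exact G₁.irrefl hadj
  intro hc
  have hr := hc.preconnected ⟨u, by simp⟩ ⟨v, by simp⟩
  rw [hbot, SimpleGraph.reachable_bot] at hr
  exact hne (congrArg Subtype.val hr)

theorem not_superConnected_of_disconnected'
    (hconn : G₁.Connected) (hnc : G₁ ≠ ⊤)
    (h₂ : ¬ G₂.Connected) (hiso : isoSet G₂ = ∅) :
    ¬ SuperConnected (lexProd G₁ G₂) := by
  intro hsuper
  classical
  set n := Nat.card V with hn
  set cw := Nat.card W with hcw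
  have hcw1 : 1 ≤ cw := Nat.card_pos
  obtain ⟨u, v, huv, hnadj⟩ := exists_nonadj G₁ hnc
  have hpair : IsVertexCut G₁ ({u, v} : Set V)ᶜ := pair_cut G₁ huv hnadj
  set cutSet : Set ℕ := {m | ∃ S : Set V, IsVertexCut G₁ S ∧ S.ncard = m} with hcs
  have hne : cutSet.Nonempty := ⟨_, _, hpair, rfl⟩
  set κ₁ := graphConnectivity G₁ with hκ
  have hκmem : κ₁ ∈ cutSet := Nat.sInf_mem hne
  obtain ⟨C, hCcut, hCcard⟩ := hκmem
  have hκle : κ₁ ≤ (({u, v} : Set V)ᶜ).ncard := Nat.sInf_le ⟨_, hpair, rfl⟩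
  have hsum1 : ({u, v} : Set V).ncard + (({u, v} : Set V)ᶜ).ncard = n :=
    Set.ncard_add_ncard_compl _
  have hp2 : ({u, v} : Set V).ncard = 2 := Set.ncard_pair huv
  have hκn : κ₁ + 2 ≤ n := by omega
  have hsumC : C.ncard + Cᶜ.ncard = n := Set.ncard_add_ncard_compl _
  -- C is a disconnecting cut
  have hCdis : Cᶜ.Nonempty ∧ ¬ (G₁.induce Cᶜ).Connected := by
    rcases hCcut with h | ⟨w, hw⟩
    · exact h
    · exfalso
      have : Cᶜ.ncard = 1 := by rw [hw]; exact Set.ncard_singleton w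
      omega
  obtain ⟨hCne, hCdis⟩ := hCdis
  set S : Set (V × W) := C ×ˢ (Set.univ : Set W) with hS
  have hScompl : Sᶜ = Cᶜ ×ˢ (Set.univ : Set W) := mycompl_prod C
  have hSncard : S.ncard = κ₁ * cw := by
    rw [hS, myncard_prod, hCcard, Set.ncard_univ]
  -- S is a vertex cut of the lexicographic product
  have hScut : IsVertexCut (lexProd G₁ G₂) S := by
    left
    obtain ⟨a, ha⟩ := hCne
    have y₀ : W := Classical.arbitrary W
    constructor
    · exact ⟨(a, y₀), by rw [hScompl]; exact ⟨ha, trivial⟩⟩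
    · intro hc
      rw [hScompl] at hc
      refine hCdis ?_
      haveI : Nonempty ↥Cᶜ := ⟨⟨a, ha⟩⟩
      refine ⟨?_⟩
      intro p q
      obtain ⟨w⟩ := hc.preconnected ⟨(↑p, y₀), ⟨p.2, trivial⟩⟩ ⟨(↑q, y₀), ⟨q.2, trivial⟩⟩
      exact proj_reachable G₁ G₂ w
  -- lower bound: every vertex cut of the product has at least κ₁ * cw vertices
  have hlb : ∀ m ∈ {m | ∃ S' : Set (V × W), IsVertexCut (lexProd G₁ G₂) S' ∧ S'.ncard = m},
      κ₁ * cw ≤ m := by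
    rintro m ⟨S', hcut', rfl⟩
    by_contra hlt
    push_neg at hlt
    set T : Set V := {x | ∀ y, (x, y) ∈ S'} with hT
    have hTsub : T ×ˢ (Set.univ : Set W) ⊆ S' := by
      rintro ⟨x, y⟩ ⟨hx, -⟩
      exact hx y
    have hTcard : T.ncard * cw ≤ S'.ncard := by
      have h := Set.ncard_le_ncard hTsub (Set.toFinite S')
      rw [myncard_prod, Set.ncard_univ] at h
      exact h
    have hTlt : T.ncard < κ₁ :=
      Nat.lt_of_mul_lt_mul_right (lt_of_le_of_lt hTcard hlt)
    have hTnotcut : ¬ IsVertexCut G₁ T := by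
      intro h
      have : κ₁ ≤ T.ncard := Nat.sInf_le ⟨T, h, rfl⟩
      omega
    simp only [IsVertexCut, not_or, not_and, not_not, not_exists] at hTnotcut
    obtain ⟨hnc1, hns⟩ := hTnotcut
    have hsumT : T.ncard + Tᶜ.ncard = n := Set.ncard_add_ncard_compl _
    have hTcne : Tᶜ.Nonempty := by
      rw [Set.nonempty_iff_ne_empty]
      intro hemp
      have : Tᶜ.ncard = 0 := by rw [hemp]; exact Set.ncard_empty V
      omega
    have hTconn : (G₁.induce Tᶜ).Connected := hnc1 hTcne
    obtain ⟨a, ha⟩ := hTcne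
    have hb : ∃ b ∈ Tᶜ, b ≠ a := by
      by_contra hb
      push_neg at hb
      exact hns a (Set.eq_singleton_iff_unique_mem.mpr ⟨ha, hb⟩)
    obtain ⟨b, hbm, hba⟩ := hb
    have h2 : ∃ p q : ↥Tᶜ, p ≠ q :=
      ⟨⟨a, ha⟩, ⟨b, hbm⟩, fun h => hba (congrArg Subtype.val h).symm⟩
    have hconn' : ((lexProd G₁ G₂).induce S'ᶜ).Connected := by
      refine connected_del G₁ G₂ ?_ ?_ hTconn h2
      · intro x hx
        simp only [hT, Set.mem_setOf_eq, not_forall] at hx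
        exact hx
      · intro x y hxy hxT
        exact hxy (hxT y)
    rcases hcut' with ⟨-, hnc'⟩ | ⟨w, hw⟩
    · exact hnc' hconn'
    · have hw1 : S'ᶜ.ncard = 1 := by rw [hw]; exact Set.ncard_singleton w
      have hsum' : S'.ncard + S'ᶜ.ncard = n * cw := by
        rw [Set.ncard_add_ncard_compl, Nat.card_prod]
      have h5 : κ₁ * cw + 2 * cw ≤ n * cw := by
        rw [← add_mul]
        exact Nat.mul_le_mul_right cw hκn
      have h6 : S'.ncard + 2 * cw < κ₁ * cw + 2 * cw := Nat.add_lt_add_right hlt _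
      have h7 : S'.ncard + 2 * cw < S'.ncard + 1 := by
        calc S'.ncard + 2 * cw < κ₁ * cw + 2 * cw := h6
          _ ≤ n * cw := h5
          _ = S'.ncard + 1 := by omega
      omega
  -- S is a minimum vertex cut
  have hmin : IsMinVertexCut (lexProd G₁ G₂) S := by
    refine ⟨hScut, le_antisymm ?_ ?_⟩
    · rw [hSncard]
      exact le_csInf ⟨S.ncard, ⟨S, hScut, rfl⟩⟩ hlb
    · exact Nat.sInf_le ⟨S, hScut, rfl⟩
  obtain ⟨⟨x, y⟩, hvS, hviso⟩ := hsuper S hmin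
  have hxC : x ∉ C := fun hx => hvS ⟨hx, trivial⟩
  have hy : y ∉ isoSet G₂ := by rw [hiso]; exact Set.notMem_empty y
  simp only [isoSet, Set.mem_setOf_eq, not_forall, not_not] at hy
  obtain ⟨y', hy'⟩ := hy
  have h2S : (x, y') ∉ S := fun hm => hxC hm.1
  exact hviso (x, y') h2S (Or.inr ⟨rfl, hy'⟩)

end Main


/-- If G₁ is connected and non-complete and G₂ is disconnected with no isolated
vertices, then G₁∘G₂ is not super connected. -/
theorem not_superConnected_of_disconnected {V W : Type*} [Fintype V] [Fintype W] [Nonempty W]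
    (G₁ : SimpleGraph V) (G₂ : SimpleGraph W)
    (hconn : G₁.Connected) (hnc : G₁ ≠ ⊤)
    (h₂ : ¬ G₂.Connected) (hiso : isoSet G₂ = ∅) :
    ¬ SuperConnected (lexProd G₁ G₂) :=
  not_superConnected_of_disconnected' G₁ G₂ hconn hnc h₂ hiso
end

section
/- Let G₁ be a finite connected graph that is not complete and let G₂ be a finite disconnected graph with at least one isolated vertex (|V₀(G₂)| ≥ 1). If G₁ is super connected, then the lexicographic product G₁∘G₂ is super connected. -/
lemma reach_map {α β : Type*} {G : SimpleGraph α} {H : SimpleGraph β} (f : α → β)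
    (h : ∀ a b, G.Adj a b → f a = f b ∨ H.Adj (f a) (f b)) {u v : α}
    (hr : G.Reachable u v) : H.Reachable (f u) (f v) := by
  obtain ⟨w⟩ := hr
  induction w with
  | nil => exact SimpleGraph.Reachable.refl _
  | cons h' p ih =>
    rcases h _ _ h' with he | ha
    · exact he ▸ ih
    · exact ha.reachable.trans ih

lemma reach_eq {α : Type*} {G : SimpleGraph α} (h : ∀ a b, ¬ G.Adj a b) {u v : α}
    (hr : G.Reachable u v) : u = v := by
  obtain ⟨w⟩ := hr
  cases w with
  | nil => rfl
  | cons h' _ => exact absurd h' (h _ _)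

lemma exists_adj {α : Type*} {G : SimpleGraph α} (h : G.Preconnected) {u v : α}
    (hne : u ≠ v) : ∃ w, G.Adj u w := by
  obtain ⟨p⟩ := h u v
  cases p with
  | nil => exact absurd rfl hne
  | cons h' _ => exact ⟨_, h'⟩

lemma ncard_prod' {α β : Type*} [Fintype α] [Fintype β] (s : Set α) (t : Set β) :
    (s ×ˢ t).ncard = s.ncard * t.ncard := by
  classical
  rw [Set.ncard_eq_toFinset_card', Set.ncard_eq_toFinset_card', Set.ncard_eq_toFinset_card',
    Set.toFinset_prod, Finset.card_product]

/-- If G₁ is connected, non-complete and super connected, and G₂ is disconnected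
with at least one isolated vertex, then G₁∘G₂ is super connected. -/
theorem superConnected_lexProd {V W : Type*} [Fintype V] [Fintype W] [Nonempty W]
    (G₁ : SimpleGraph V) (G₂ : SimpleGraph W)
    (hconn : G₁.Connected) (hnc : G₁ ≠ ⊤)
    (h₂ : ¬ G₂.Connected) (hiso : (isoSet G₂).Nonempty)
    (hsup : SuperConnected G₁) :
    SuperConnected (lexProd G₁ G₂) := by
  classical
  have y₀ : W := Classical.arbitrary W
  set w : ℕ := Fintype.card W with hw
  have hwpos : 0 < w := Fintype.card_pos
  -- a non-adjacent pair in G₁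
  obtain ⟨a, b, hab, hnadj⟩ : ∃ a b : V, a ≠ b ∧ ¬ G₁.Adj a b := by
    by_contra h
    push_neg at h
    apply hnc
    ext u v
    simp only [SimpleGraph.top_adj]
    exact ⟨fun h' => h'.ne, fun h' => h u v h'⟩
  -- {a,b}ᶜ is a vertex cut of G₁
  have cutAB : IsVertexCut G₁ ({a, b} : Set V)ᶜ := by
    left
    rw [compl_compl]
    refine ⟨⟨a, by simp⟩, ?_⟩
    intro hc
    have hne' : (⟨a, by simp⟩ : ({a, b} : Set V)) ≠ ⟨b, by simp⟩ := by
      simp [Subtype.ext_iff, hab]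
    have : (⟨a, by simp⟩ : ({a, b} : Set V)) = ⟨b, by simp⟩ := by
      refine reach_eq ?_ (hc.preconnected _ _)
      rintro ⟨p, hp⟩ ⟨q, hq⟩ hadj
      have hadj' : G₁.Adj p q := hadj
      simp only [Set.mem_insert_iff, Set.mem_singleton_iff] at hp hq
      rcases hp with rfl | rfl <;> rcases hq with rfl | rfl
      · exact G₁.irrefl hadj'
      · exact hnadj hadj'
      · exact hnadj hadj'.symm
      · exact G₁.irrefl hadj'
    exact hne' this
  have hcardAB : (({a, b} : Set V)ᶜ).ncard = Fintype.card V - 2 := by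
    have h1 := Set.ncard_add_ncard_compl ({a, b} : Set V)
    rw [Set.ncard_pair hab, Nat.card_eq_fintype_card] at h1
    omega
  set κ₁ : ℕ := graphConnectivity G₁ with hκ₁
  have hκ₁le : κ₁ ≤ Fintype.card V - 2 :=
    Nat.sInf_le ⟨({a, b} : Set V)ᶜ, cutAB, hcardAB⟩
  -- a minimum vertex cut of G₁ exists
  have hκ₁mem : κ₁ ∈ {n | ∃ S : Set V, IsVertexCut G₁ S ∧ S.ncard = n} :=
    Nat.sInf_mem ⟨_, ⟨({a, b} : Set V)ᶜ, cutAB, hcardAB⟩⟩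
  obtain ⟨B₁, hB₁cut, hB₁card⟩ := hκ₁mem
  -- B₁ ×ˢ univ is a vertex cut of the lexicographic product
  have hprodcompl : ∀ (T : Set V), ((T ×ˢ (Set.univ : Set W))ᶜ : Set (V × W)) = Tᶜ ×ˢ Set.univ := by
    intro T
    ext ⟨x, y⟩
    simp [Set.mem_prod]
  have hcut : IsVertexCut (lexProd G₁ G₂) (B₁ ×ˢ (Set.univ : Set W)) := by
    left
    rw [hprodcompl]
    rcases hB₁cut with ⟨hne₁, hdis₁⟩ | ⟨x₀, hx₀⟩
    · obtain ⟨x, hx⟩ := hne₁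
      refine ⟨⟨(x, y₀), hx, trivial⟩, ?_⟩
      intro hc
      apply hdis₁
      rw [SimpleGraph.connected_iff]
      refine ⟨?_, ⟨⟨x, hx⟩⟩⟩
      rintro ⟨p, hp⟩ ⟨q, hq⟩
      have hr := hc.preconnected ⟨(p, y₀), hp, trivial⟩ ⟨(q, y₀), hq, trivial⟩
      refine reach_map (fun r => (⟨r.1.1, r.2.1⟩ : ↥(B₁ᶜ))) ?_ hr
      intro c d hadj
      have hadj' : G₁.Adj c.1.1 d.1.1 ∨ (c.1.1 = d.1.1 ∧ G₂.Adj c.1.2 d.1.2) := hadj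
      rcases hadj' with h | ⟨h, -⟩
      · exact Or.inr h
      · exact Or.inl (Subtype.ext h)
    · have hx₀mem : x₀ ∈ B₁ᶜ := by rw [hx₀]; rfl
      refine ⟨⟨(x₀, y₀), hx₀mem, trivial⟩, ?_⟩
      intro hc
      apply h₂
      rw [SimpleGraph.connected_iff]
      refine ⟨?_, inferInstance⟩
      intro y y'
      have hr := hc.preconnected ⟨(x₀, y), hx₀mem, trivial⟩ ⟨(x₀, y'), hx₀mem, trivial⟩
      refine reach_map (fun r => r.1.2) ?_ hr
      intro c d hadj
      have hadj' : G₁.Adj c.1.1 d.1.1 ∨ (c.1.1 = d.1.1 ∧ G₂.Adj c.1.2 d.1.2) := hadj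
      rcases hadj' with h | ⟨-, h⟩
      · exfalso
        have hc1 : c.1.1 ∈ B₁ᶜ := c.2.1
        have hd1 : d.1.1 ∈ B₁ᶜ := d.2.1
        have hc2 : c.1.1 = x₀ := (Set.ext_iff.mp hx₀ _).mp hc1
        have hd2 : d.1.1 = x₀ := (Set.ext_iff.mp hx₀ _).mp hd1
        exact (G₁.ne_of_adj h) (hc2.trans hd2.symm)
      · exact Or.inr h
  have hκle : graphConnectivity (lexProd G₁ G₂) ≤ κ₁ * w :=
    Nat.sInf_le ⟨B₁ ×ˢ Set.univ, hcut, by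
      rw [ncard_prod', hB₁card, Set.ncard_univ, Nat.card_eq_fintype_card]⟩
  -- main argument
  intro S hS
  obtain ⟨hScut, hScard⟩ := hS
  rcases hScut with ⟨hne, hdis⟩ | ⟨v, hv⟩
  swap
  · refine ⟨v, ?_, ?_⟩
    · have : v ∈ Sᶜ := by rw [hv]; rfl
      exact this
    · intro u hu
      have : u ∈ Sᶜ := hu
      rw [hv, Set.mem_singleton_iff] at this
      subst this
      exact (lexProd G₁ G₂).irrefl
  -- the set of "full columns"
  set B : Set V := {x | ∀ y, (x, y) ∈ S} with hB
  have hBsub : B ×ˢ (Set.univ : Set W) ⊆ S := by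
    rintro ⟨x, y⟩ ⟨hx, -⟩
    exact hx y
  have hSBcard : B.ncard * w ≤ S.ncard := by
    have := Set.ncard_le_ncard hBsub (Set.toFinite S)
    rwa [ncard_prod', Set.ncard_univ, Nat.card_eq_fintype_card] at this
  have hSle : S.ncard ≤ κ₁ * w := hScard ▸ hκle
  have hBle : B.ncard ≤ κ₁ :=
    Nat.le_of_mul_le_mul_right (le_trans hSBcard hSle) hwpos
  have hBne : Bᶜ.Nonempty := by
    obtain ⟨⟨x, y⟩, hxy⟩ := hne
    exact ⟨x, fun h => hxy (h y)⟩
  by_cases h2 : ∃ x₁ ∉ B, ∃ x₂ ∉ B, x₁ ≠ x₂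
  · -- at least two non-full columns
    by_cases hBc : (G₁.induce Bᶜ).Connected
    · -- contradiction: G - S would be connected
      exfalso
      apply hdis
      have hchoice : ∀ x : V, x ∉ B → ∃ y, (x, y) ∈ Sᶜ := fun x hx => not_forall.mp hx
      choose g hg using hchoice
      have R1 : ∀ (c d : ↥(Bᶜ)),
          ((lexProd G₁ G₂).induce Sᶜ).Reachable ⟨(c.1, g c.1 c.2), hg c.1 c.2⟩
            ⟨(d.1, g d.1 d.2), hg d.1 d.2⟩ := by
        intro c d
        refine reach_map (fun r => (⟨(r.1, g r.1 r.2), hg r.1 r.2⟩ : ↥(Sᶜ))) ?_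
          (hBc.preconnected c d)
        intro c' d' hadj
        have hadj' : G₁.Adj c'.1 d'.1 := hadj
        exact Or.inr (Or.inl hadj')
      have R2 : ∀ (x : V) (hx : x ∉ B) (y : W) (hy : (x, y) ∈ Sᶜ),
          ((lexProd G₁ G₂).induce Sᶜ).Reachable ⟨(x, y), hy⟩
            ⟨(x, g x hx), hg x hx⟩ := by
        intro x hx y hy
        obtain ⟨x₁, h₁, x₂, h₂', hne12⟩ := h2
        have hz : ∃ z, z ∉ B ∧ z ≠ x := by
          by_cases hxx : x = x₁
          · exact ⟨x₂, h₂', fun h => hne12 (hxx ▸ h.symm)⟩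
          · exact ⟨x₁, h₁, fun h => hxx h.symm⟩
        obtain ⟨z, hzB, hzx⟩ := hz
        obtain ⟨c, hc⟩ := exists_adj hBc.preconnected
          (show (⟨x, hx⟩ : ↥(Bᶜ)) ≠ ⟨z, hzB⟩ by
            intro h; exact hzx (congrArg Subtype.val h).symm)
        have hc' : G₁.Adj x c.1 := hc
        have hadj1 : ((lexProd G₁ G₂).induce Sᶜ).Adj ⟨(x, y), hy⟩
            ⟨(c.1, g c.1 c.2), hg c.1 c.2⟩ := by
          show G₁.Adj x c.1 ∨ _
          exact Or.inl hc'
        have hadj2 : ((lexProd G₁ G₂).induce Sᶜ).Adj ⟨(c.1, g c.1 c.2), hg c.1 c.2⟩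
            ⟨(x, g x hx), hg x hx⟩ := by
          show G₁.Adj c.1 x ∨ _
          exact Or.inl hc'.symm
        exact hadj1.reachable.trans hadj2.reachable
      rw [SimpleGraph.connected_iff]
      obtain ⟨p, hp⟩ := hne
      refine ⟨?_, ⟨⟨p, hp⟩⟩⟩
      rintro ⟨⟨x, y⟩, hp⟩ ⟨⟨x', y'⟩, hq⟩
      have hp' : (x, y) ∉ S := hp
      have hq' : (x', y') ∉ S := hq
      have hx : x ∉ B := fun h => hp' (h y)
      have hx' : x' ∉ B := fun h => hq' (h y')
      exact ((R2 x hx y hp).trans (R1 ⟨x, hx⟩ ⟨x', hx'⟩)).trans (R2 x' hx' y' hq).symm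
    · -- B is a vertex cut of G₁, hence a minimum one, and S = B ×ˢ univ
      have hBcut : IsVertexCut G₁ B := Or.inl ⟨hBne, hBc⟩
      have hκ₁leB : κ₁ ≤ B.ncard := Nat.sInf_le ⟨B, hBcut, rfl⟩
      have hBeq : B.ncard = κ₁ := le_antisymm hBle hκ₁leB
      have hSprod : B ×ˢ (Set.univ : Set W) = S := by
        apply Set.eq_of_subset_of_ncard_le hBsub
        rw [ncard_prod', Set.ncard_univ, Nat.card_eq_fintype_card, hBeq]
        exact hSle
      obtain ⟨x, hxB, hxiso⟩ := hsup B ⟨hBcut, hBeq⟩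
      obtain ⟨yI, hyI⟩ := hiso
      refine ⟨(x, yI), ?_, ?_⟩
      · rw [← hSprod]
        rintro ⟨hx, -⟩
        exact hxB hx
      · rintro ⟨x', y'⟩ hq (hadj | ⟨heq, hadj⟩)
        · have hx' : x' ∉ B := by
            rw [← hSprod] at hq
            intro h
            exact hq ⟨h, trivial⟩
          exact hxiso x' hx' hadj
        · exact hyI y' hadj
  · -- Bᶜ is a singleton: impossible by counting
    exfalso
    push_neg at h2
    obtain ⟨x, hx⟩ := hBne
    have hBcompl : Bᶜ = {x} := by
      ext z
      simp only [Set.mem_singleton_iff]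
      exact ⟨fun hz => h2 z hz x hx, fun hz => hz ▸ hx⟩
    have hBcard : B.ncard = Fintype.card V - 1 := by
      have h1 := Set.ncard_add_ncard_compl B
      rw [hBcompl, Set.ncard_singleton, Nat.card_eq_fintype_card] at h1
      omega
    have hV2 : 2 ≤ Fintype.card V :=
      Fintype.one_lt_card_iff_nontrivial.mpr ⟨⟨a, b, hab⟩⟩
    have hchain : (Fintype.card V - 1) * w ≤ (Fintype.card V - 2) * w := by
      calc (Fintype.card V - 1) * w = B.ncard * w := by rw [hBcard]
        _ ≤ S.ncard := hSBcard
        _ ≤ κ₁ * w := hSle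
        _ ≤ (Fintype.card V - 2) * w := Nat.mul_le_mul_right w hκ₁le
    have := Nat.le_of_mul_le_mul_right hchain hwpos
    omega
end
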